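/- (Error bound of Theorem 2, layer-dependent noise.) Let m, ℓ ∈ ℕ and 0 ≤ q̄ ≤ 1. Suppose q : Fin m → ℝ satisfies 0 ≤ q_i ≤ q̄ for every i, and d, d⁰ : ({-1,0,1}^m) → ℝ satisfy |d_ω| ≤ (∏_i q_i^{|ω_i|})·|d⁰_ω| for every frequency vector ω (where |ω_i| ∈ {0,1} is the absolute value of the i-th entry), and Σ_ω 2^{-|ω|} (d⁰_ω)² ≤ 1. Define f(θ) = Σ_ω d_ω Φ_ω(θ) and g(θ) = Σ_{|ω| ≤ ℓ} d_ω Φ_ω(θ). Then Δ(f,g) ≤ q̄^{ℓ+1}. -/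

import Mathlib

open MeasureTheory Finset

/-- The trigonometric monomial factor: `φ₀ = 1`, `φ₁ = cos`, `φ₋₁ = sin`. -/
noncomputable def phi (w : ℤ) (x : ℝ) : ℝ :=
  if w = 1 then Real.cos x else if w = -1 then Real.sin x else 1

/-- The multivariate trigonometric monomial `Φ_ω(θ) = ∏ i, φ_{ω i}(θ i)`. -/
noncomputable def Phi {m : ℕ} (ω : Fin m → ℤ) (θ : Fin m → ℝ) : ℝ :=
  ∏ i, phi (ω i) (θ i)

/-- The weight `|ω|` of a frequency vector: the number of nonzero entries. -/
def wt {m : ℕ} (ω : Fin m → ℤ) : ℕ := (Finset.univ.filter fun i => ω i ≠ 0).card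

/-- The finite set of all frequency vectors `ω ∈ {-1,0,1}^m`. -/
def freqSet (m : ℕ) : Finset (Fin m → ℤ) :=
  Fintype.piFinset fun _ => ({-1, 0, 1} : Finset ℤ)

/-- The mean of a function over the cube `[0, 2π]^m`. -/
noncomputable def cubeMean (m : ℕ) (h : (Fin m → ℝ) → ℝ) : ℝ :=
  ((2 * Real.pi) ^ m)⁻¹ *
    ∫ θ in Set.Icc (0 : Fin m → ℝ) (fun _ => 2 * Real.pi), h θ

/-- The average `L²` distance `Δ(f,g)` over the parameter cube `[0, 2π]^m`. -/
noncomputable def Delta (m : ℕ) (f g : (Fin m → ℝ) → ℝ) : ℝ :=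
  Real.sqrt (cubeMean m fun θ => (f θ - g θ) ^ 2)
lemma phi_cont (w : ℤ) : Continuous (phi w) := by
  unfold phi; split_ifs
  · exact Real.continuous_cos
  · exact Real.continuous_sin
  · exact continuous_const

lemma int1d (w w' : ℤ) (hw : w ∈ ({-1, 0, 1} : Finset ℤ)) (hw' : w' ∈ ({-1, 0, 1} : Finset ℤ)) :
    ∫ x in Set.Icc (0:ℝ) (2*Real.pi), phi w x * phi w' x =
      if w = w' then (if w = 0 then 2*Real.pi else Real.pi) else 0 := by
  have hle : (0:ℝ) ≤ 2*Real.pi := by positivity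
  rw [MeasureTheory.integral_Icc_eq_integral_Ioc, ← intervalIntegral.integral_of_le hle]
  fin_cases hw <;> fin_cases hw' <;>
    simp [phi, ← sq, integral_sin_sq, integral_cos_sq, integral_sin_mul_cos₁,
      mul_comm (Real.cos _) (Real.sin _)] <;> ring

lemma cube_integral_prod {m : ℕ} (f : Fin m → ℝ → ℝ) :
    ∫ θ in Set.Icc (0 : Fin m → ℝ) (fun _ => 2 * Real.pi), ∏ i, f i (θ i) =
      ∏ i, ∫ x in Set.Icc (0:ℝ) (2*Real.pi), f i x := by
  have hmeas : MeasurableSet (Set.Icc (0 : Fin m → ℝ) (fun _ => 2 * Real.pi)) :=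
    measurableSet_Icc
  rw [← integral_indicator hmeas]
  have : (Set.Icc (0 : Fin m → ℝ) (fun _ => 2 * Real.pi)).indicator
      (fun θ => ∏ i, f i (θ i)) =
      fun θ => ∏ i, (Set.Icc (0:ℝ) (2*Real.pi)).indicator (f i) (θ i) := by
    funext θ
    by_cases h : θ ∈ Set.Icc (0 : Fin m → ℝ) (fun _ => 2 * Real.pi)
    · rw [Set.indicator_of_mem h]
      refine Finset.prod_congr rfl fun i _ => ?_
      exact (Set.indicator_of_mem (Set.mem_Icc.mpr ⟨(Set.mem_Icc.mp h).1 i, (Set.mem_Icc.mp h).2 i⟩) (f i)).symm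
    · rw [Set.indicator_of_notMem h]
      obtain ⟨i, hi⟩ : ∃ i, θ i ∉ Set.Icc (0:ℝ) (2*Real.pi) := by
        by_contra hc
        push_neg at hc
        exact h (Set.mem_Icc.mpr ⟨fun i => (Set.mem_Icc.mp (hc i)).1, fun i => (Set.mem_Icc.mp (hc i)).2⟩)
      symm
      exact Finset.prod_eq_zero (Finset.mem_univ i) (Set.indicator_of_notMem hi _)
  rw [this, volume_pi, MeasureTheory.integral_fintype_prod_eq_prod (ι := Fin m)
    (fun i => (Set.Icc (0:ℝ) (2*Real.pi)).indicator (f i))]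
  exact Finset.prod_congr rfl fun i _ => integral_indicator measurableSet_Icc

lemma orth {m : ℕ} (ω ω' : Fin m → ℤ) (hω : ω ∈ freqSet m) (hω' : ω' ∈ freqSet m) :
    ∫ θ in Set.Icc (0 : Fin m → ℝ) (fun _ => 2 * Real.pi), Phi ω θ * Phi ω' θ =
      if ω = ω' then (2*Real.pi)^m * ((2:ℝ) ^ wt ω)⁻¹ else 0 := by
  have hπ : (0:ℝ) < Real.pi := Real.pi_pos
  have key : ∫ θ in Set.Icc (0 : Fin m → ℝ) (fun _ => 2 * Real.pi), Phi ω θ * Phi ω' θ =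
      ∏ i, (if ω i = ω' i then (if ω i = 0 then 2*Real.pi else Real.pi) else 0) := by
    have : (fun θ : Fin m → ℝ => Phi ω θ * Phi ω' θ) =
        fun θ => ∏ i, (phi (ω i) (θ i) * phi (ω' i) (θ i)) := by
      funext θ; rw [Phi, Phi, ← Finset.prod_mul_distrib]
    rw [this, cube_integral_prod fun i x => phi (ω i) x * phi (ω' i) x]
    exact Finset.prod_congr rfl fun i _ =>
      int1d _ _ (Fintype.mem_piFinset.mp hω i) (Fintype.mem_piFinset.mp hω' i)
  rw [key]
  by_cases h : ω = ω'
  · subst h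
    simp only [if_pos rfl, if_true]
    have hsplit := Finset.prod_filter_mul_prod_filter_not Finset.univ
      (fun i => ω i = 0) (fun i => if ω i = 0 then 2*Real.pi else Real.pi)
    rw [← hsplit]
    have h1 : ∏ i ∈ Finset.univ.filter (fun i => ω i = 0),
        (if ω i = 0 then 2*Real.pi else Real.pi) = (2*Real.pi) ^ (m - wt ω) := by
      rw [Finset.prod_congr rfl (fun i hi => if_pos (Finset.mem_filter.mp hi).2),
        Finset.prod_const]
      congr 1
      have := Finset.card_filter_add_card_filter_not (s := Finset.univ)
        (p := fun i : Fin m => ω i = 0)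
      simp only [Finset.card_univ, Fintype.card_fin] at this
      unfold wt
      simp only [ne_eq]
      omega
    have h2 : ∏ i ∈ Finset.univ.filter (fun i => ¬ ω i = 0),
        (if ω i = 0 then 2*Real.pi else Real.pi) = Real.pi ^ wt ω := by
      rw [Finset.prod_congr rfl (fun i hi => if_neg (Finset.mem_filter.mp hi).2),
        Finset.prod_const]
      rfl
    rw [h1, h2]
    have hwle : wt ω ≤ m := by
      unfold wt; simpa using Finset.card_filter_le Finset.univ (fun i : Fin m => ω i ≠ 0)
    have h2ne : ((2:ℝ) ^ wt ω) ≠ 0 := by positivity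
    field_simp
    have hmp : Real.pi ^ wt ω * 2 ^ wt ω = (2*Real.pi) ^ wt ω := by rw [mul_pow]; ring
    rw [mul_assoc, hmp, ← pow_add, show m - wt ω + wt ω = m from by omega]
  · rw [if_neg h]
    obtain ⟨i, hi⟩ : ∃ i, ω i ≠ ω' i := by
      by_contra hc; push_neg at hc; exact h (funext hc)
    exact Finset.prod_eq_zero (Finset.mem_univ i) (if_neg hi)

lemma Phi_cont {m : ℕ} (ω : Fin m → ℤ) : Continuous (Phi ω) :=
  continuous_finset_prod _ fun i _ => (phi_cont (ω i)).comp (continuous_apply i)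

lemma mean_sq {m : ℕ} (S : Finset (Fin m → ℤ)) (hS : S ⊆ freqSet m) (c : (Fin m → ℤ) → ℝ) :
    cubeMean m (fun θ => (∑ ω ∈ S, c ω * Phi ω θ)^2) =
      ∑ ω ∈ S, c ω^2 * ((2:ℝ)^wt ω)⁻¹ := by
  have hint : ∀ ω ω' : Fin m → ℤ, IntegrableOn
      (fun θ : Fin m → ℝ => (c ω * c ω') * (Phi ω θ * Phi ω' θ))
      (Set.Icc (0 : Fin m → ℝ) (fun _ => 2*Real.pi)) volume := fun ω ω' =>
    ((continuous_const.mul ((Phi_cont ω).mul (Phi_cont ω'))).continuousOn).integrableOn_compact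
      isCompact_Icc
  have hexp : (fun θ : Fin m → ℝ => (∑ ω ∈ S, c ω * Phi ω θ)^2) =
      fun θ => ∑ ω ∈ S, ∑ ω' ∈ S, (c ω * c ω') * (Phi ω θ * Phi ω' θ) := by
    funext θ
    rw [sq, Finset.sum_mul_sum]
    exact Finset.sum_congr rfl fun ω _ => Finset.sum_congr rfl fun ω' _ => by ring
  unfold cubeMean
  rw [hexp, integral_finset_sum _ (fun ω _ => integrable_finset_sum _ (fun ω' _ => hint ω ω'))]
  have h1 : ∀ ω ∈ S, (∫ θ in Set.Icc (0 : Fin m → ℝ) (fun _ => 2*Real.pi),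
      ∑ ω' ∈ S, (c ω * c ω') * (Phi ω θ * Phi ω' θ)) = c ω^2 * ((2*Real.pi)^m * ((2:ℝ)^wt ω)⁻¹) := by
    intro ω hω
    rw [integral_finset_sum _ (fun ω' _ => hint ω ω')]
    have : ∀ ω' ∈ S, (∫ θ in Set.Icc (0 : Fin m → ℝ) (fun _ => 2*Real.pi),
        (c ω * c ω') * (Phi ω θ * Phi ω' θ)) =
        (c ω * c ω') * (if ω = ω' then (2*Real.pi)^m * ((2:ℝ)^wt ω)⁻¹ else 0) := by
      intro ω' hω'
      rw [integral_const_mul, orth ω ω' (hS hω) (hS hω')]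
    rw [Finset.sum_congr rfl this, Finset.sum_eq_single_of_mem ω hω
      (fun ω' _ hne => by rw [if_neg (fun h => hne h.symm), mul_zero]), if_pos rfl, sq]
  rw [Finset.sum_congr rfl h1, Finset.mul_sum]
  have hne : ((2*Real.pi)^m : ℝ) ≠ 0 := by positivity
  exact Finset.sum_congr rfl fun ω _ => by field_simp


theorem stmt5 (m ℓ : ℕ) (qbar : ℝ) (hqbar0 : 0 ≤ qbar) (hqbar1 : qbar ≤ 1)
    (q : Fin m → ℝ) (hq0 : ∀ i, 0 ≤ q i) (hq : ∀ i, q i ≤ qbar)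
    (d d0 : (Fin m → ℤ) → ℝ)
    (hd : ∀ ω ∈ freqSet m, |d ω| ≤ (∏ i, q i ^ (ω i).natAbs) * |d0 ω|)
    (hd0 : ∑ ω ∈ freqSet m, ((2 : ℝ) ^ wt ω)⁻¹ * d0 ω ^ 2 ≤ 1) :
    Delta m (fun θ => ∑ ω ∈ freqSet m, d ω * Phi ω θ)
        (fun θ => ∑ ω ∈ (freqSet m).filter (fun ω => wt ω ≤ ℓ), d ω * Phi ω θ) ≤
      qbar ^ (ℓ + 1) := by
  set S : Finset (Fin m → ℤ) := (freqSet m).filter (fun ω => ¬ wt ω ≤ ℓ) with hSdef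
  have key : (fun θ : Fin m → ℝ =>
      ((∑ ω ∈ freqSet m, d ω * Phi ω θ) -
        ∑ ω ∈ (freqSet m).filter (fun ω => wt ω ≤ ℓ), d ω * Phi ω θ) ^ 2) =
      fun θ => (∑ ω ∈ S, d ω * Phi ω θ) ^ 2 := by
    funext θ
    rw [← Finset.sum_filter_add_sum_filter_not (freqSet m) (fun ω => wt ω ≤ ℓ)
      (fun ω => d ω * Phi ω θ)]
    ring
  rw [Delta, key, mean_sq S (Finset.filter_subset _ _) d]
  have hb : ∑ ω ∈ S, d ω ^ 2 * ((2:ℝ) ^ wt ω)⁻¹ ≤ (qbar ^ (ℓ+1)) ^ 2 := by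
    have step1 : ∀ ω ∈ S, d ω ^ 2 * ((2:ℝ) ^ wt ω)⁻¹ ≤
        (qbar ^ (ℓ+1)) ^ 2 * (((2:ℝ) ^ wt ω)⁻¹ * d0 ω ^ 2) := by
      intro ω hω
      obtain ⟨hωf, hωl⟩ := Finset.mem_filter.mp hω
      have hwt : ℓ + 1 ≤ wt ω := by omega
      have hinv : (0:ℝ) ≤ ((2:ℝ) ^ wt ω)⁻¹ := by positivity
      have hP0 : (0:ℝ) ≤ ∏ i, q i ^ (ω i).natAbs :=
        Finset.prod_nonneg fun i _ => pow_nonneg (hq0 i) _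
      have hsum_wt : ∑ i, (ω i).natAbs = wt ω := by
        have heach : ∀ i, (ω i).natAbs = if ω i ≠ 0 then 1 else 0 := by
          intro i
          have hmem := Fintype.mem_piFinset.mp hωf i
          simp only [Finset.mem_insert, Finset.mem_singleton] at hmem
          rcases hmem with h | h | h <;> simp [h]
        rw [Finset.sum_congr rfl (fun i _ => heach i)]
        rw [Finset.sum_ite, Finset.sum_const, Finset.sum_const]
        simp [wt]
      have hPle : (∏ i, q i ^ (ω i).natAbs) ≤ qbar ^ (ℓ+1) := by
        calc (∏ i, q i ^ (ω i).natAbs) ≤ ∏ i, qbar ^ (ω i).natAbs :=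
              Finset.prod_le_prod (fun i _ => pow_nonneg (hq0 i) _)
                (fun i _ => pow_le_pow_left₀ (hq0 i) (hq i) _)
          _ = qbar ^ (∑ i, (ω i).natAbs) := by rw [← Finset.prod_pow_eq_pow_sum]
          _ = qbar ^ wt ω := by rw [hsum_wt]
          _ ≤ qbar ^ (ℓ+1) := pow_le_pow_of_le_one hqbar0 hqbar1 hwt
      have h2 : |d ω| ≤ qbar ^ (ℓ+1) * |d0 ω| :=
        le_trans (hd ω hωf) (mul_le_mul_of_nonneg_right hPle (abs_nonneg _))
      have h1 : d ω ^ 2 ≤ (qbar ^ (ℓ+1)) ^ 2 * d0 ω ^ 2 := by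
        nlinarith [abs_nonneg (d ω), abs_nonneg (d0 ω), sq_abs (d ω), sq_abs (d0 ω),
          pow_nonneg hqbar0 (ℓ+1)]
      calc d ω ^ 2 * ((2:ℝ) ^ wt ω)⁻¹ ≤ ((qbar ^ (ℓ+1)) ^ 2 * d0 ω ^ 2) * ((2:ℝ) ^ wt ω)⁻¹ :=
            mul_le_mul_of_nonneg_right h1 hinv
        _ = (qbar ^ (ℓ+1)) ^ 2 * (((2:ℝ) ^ wt ω)⁻¹ * d0 ω ^ 2) := by ring
    calc ∑ ω ∈ S, d ω ^ 2 * ((2:ℝ) ^ wt ω)⁻¹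
        ≤ ∑ ω ∈ S, (qbar ^ (ℓ+1)) ^ 2 * (((2:ℝ) ^ wt ω)⁻¹ * d0 ω ^ 2) :=
          Finset.sum_le_sum step1
      _ = (qbar ^ (ℓ+1)) ^ 2 * ∑ ω ∈ S, ((2:ℝ) ^ wt ω)⁻¹ * d0 ω ^ 2 := by
          rw [Finset.mul_sum]
      _ ≤ (qbar ^ (ℓ+1)) ^ 2 * ∑ ω ∈ freqSet m, ((2:ℝ) ^ wt ω)⁻¹ * d0 ω ^ 2 := by
          refine mul_le_mul_of_nonneg_left ?_ (by positivity)
          exact Finset.sum_le_sum_of_subset_of_nonneg (Finset.filter_subset _ _)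
            (fun ω _ _ => by positivity)
      _ ≤ (qbar ^ (ℓ+1)) ^ 2 * 1 := mul_le_mul_of_nonneg_left hd0 (by positivity)
      _ = (qbar ^ (ℓ+1)) ^ 2 := mul_one _
  calc Real.sqrt (∑ ω ∈ S, d ω ^ 2 * ((2:ℝ) ^ wt ω)⁻¹)
      ≤ Real.sqrt ((qbar ^ (ℓ+1)) ^ 2) := Real.sqrt_le_sqrt hb
    _ = qbar ^ (ℓ+1) := Real.sqrt_sq (pow_nonneg hqbar0 _)
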